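/- Let P be a finite poset with marked elements P* ⊇ min(P), let I be a chain of order ideals in P*, and let λ, μ: P* → ℝ be two markings lying in the cone L(P*, I) (i.e., each is constant on the successive differences of the chain I and weakly increasing along it). Then for any partition of the unmarked elements into C ⊔ O, O_{C,O}(P, λ+μ) = O_{C,O}(P,λ) + O_{C,O}(P,μ) (Minkowski sum). Moreover if λ and μ are integral, the same equality holds for the sets of lattice points. -/

import Mathlib

open Pointwise

/-- A saturated chain `a ≺ p₁ ≺ ⋯ ≺ p_r ≺ b` with all interior elements in `C`. -/
def SatChain {P : Type*} [PartialOrder P] (C : Set P) (a b : P) (l : List P) : Prop :=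
  (∀ p ∈ l, p ∈ C) ∧ List.Chain' (· ⋖ ·) (a :: (l ++ [b]))

/-- The marked chain-order polyhedron `O_{C,O}(P,λ) ⊆ ℝ^P`. -/
def MCO {P : Type*} [PartialOrder P] (Pstar C O : Set P) (lam : P → ℝ) : Set (P → ℝ) :=
  {x | (∀ a ∈ Pstar, x a = lam a) ∧ (∀ p ∈ C, 0 ≤ x p) ∧
    ∀ a b l, a ∈ Pstar ∪ O → b ∈ Pstar ∪ O → SatChain C a b l →
      (l.map x).sum ≤ x b - x a}

/-- Membership in the cone `L(P*, I)` for a chain of order ideals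
`∅ = I 0 ⊊ I 1 ⊊ ⋯ ⊊ I k ⊊ I (k+1) = P*`: order-preserving maps which are constant on
each difference `I (j+1) ∖ I j` and weakly increasing along the chain. -/
def InConeChain {P : Type*} [PartialOrder P] (Pstar : Set P) (I : ℕ → Set P) (k : ℕ)
    (f : P → ℝ) : Prop :=
  MonotoneOn f Pstar ∧
  (∀ j ≤ k, ∀ a ∈ I (j + 1) \ I j, ∀ b ∈ I (j + 1) \ I j, f a = f b) ∧
  (∀ j j', j ≤ j' → j' ≤ k → ∀ a ∈ I (j + 1) \ I j, ∀ b ∈ I (j' + 1) \ I j', f a ≤ f b)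

open Classical in
noncomputable def covV {P : Type*} [PartialOrder P] [Fintype P] (C : Set P) (x : P → ℝ) (p : P) : ℝ :=
  if h : (Finset.univ.filter fun q => q ⋖ p).Nonempty then
    (Finset.univ.filter fun q => q ⋖ p).attach.sup' (by rwa [Finset.attach_nonempty_iff])
      (fun q => (if q.1 ∈ C then covV C x q.1 else 0) + x q.1)
  else 0
termination_by (Finset.univ.filter fun q => q < p).card
decreasing_by
  · have hq : (q : P) ⋖ p := (Finset.mem_filter.mp q.2).2
    apply Finset.card_lt_card
    constructor
    · intro r hr
      simp only [Finset.mem_filter, Finset.mem_univ, true_and] at *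
      exact hr.trans hq.lt
    · intro hsub
      have : (q : P) ∈ Finset.univ.filter fun r => r < (q:P) := hsub (by simp [hq.lt])
      simp at this

open Classical in
lemma covV_eq {P : Type*} [PartialOrder P] [Fintype P] (C : Set P) (x : P → ℝ) {p : P}
    (hne : (Finset.univ.filter fun q => q ⋖ p).Nonempty) :
    covV C x p = (Finset.univ.filter fun q => q ⋖ p).attach.sup'
      (Finset.attach_nonempty_iff.mpr hne)
      (fun q => (if q.1 ∈ C then covV C x q.1 else 0) + x q.1) := by
  rw [covV, dif_pos hne]

open Classical in
lemma covV_le {P : Type*} [PartialOrder P] [Fintype P] (C : Set P) (x : P → ℝ) {q p : P}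
    (hq : q ⋖ p) : (if q ∈ C then covV C x q else 0) + x q ≤ covV C x p := by
  have hmem : q ∈ Finset.univ.filter fun r => r ⋖ p := by simp [hq]
  rw [covV_eq C x ⟨q, hmem⟩]
  exact Finset.le_sup' (fun r => (if r.1 ∈ C then covV C x r.1 else 0) + x r.1)
    (Finset.mem_attach _ ⟨q, hmem⟩)

open Classical in
lemma covV_exists {P : Type*} [PartialOrder P] [Fintype P] (C : Set P) (x : P → ℝ) {p : P}
    (h : ∃ q, q ⋖ p) :
    ∃ q, q ⋖ p ∧ covV C x p = (if q ∈ C then covV C x q else 0) + x q := by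
  have hne : (Finset.univ.filter fun r => r ⋖ p).Nonempty := by
    obtain ⟨q, hq⟩ := h; exact ⟨q, by simp [hq]⟩
  rw [covV_eq C x hne]
  obtain ⟨q, -, hq⟩ := Finset.exists_mem_eq_sup'
    (Finset.attach_nonempty_iff.mpr hne)
    (fun r : {r // r ∈ Finset.univ.filter fun r => r ⋖ p} =>
      (if r.1 ∈ C then covV C x r.1 else 0) + x r.1)
  exact ⟨q.1, (Finset.mem_filter.mp q.2).2, hq⟩

lemma exists_covBy_of_not_isMin {P : Type*} [PartialOrder P] [Fintype P] {p : P}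
    (h : ¬ IsMin p) : ∃ q, q ⋖ p := by
  obtain ⟨b, hb⟩ := not_isMin_iff.mp h
  obtain ⟨q, hq, hmax⟩ := Set.Finite.exists_maximalFor id {c : P | c < p}
    (Set.toFinite _) ⟨b, hb⟩
  refine ⟨q, hq, fun c hqc hcp => ?_⟩
  exact absurd (hmax hcp hqc.le) hqc.not_ge

lemma covV_attained {P : Type*} [PartialOrder P] [Fintype P] (C : Set P) (x : P → ℝ)
    (hCne : ∀ p ∈ C, ∃ q, q ⋖ p) :
    ∀ p : P, (∃ q, q ⋖ p) → ∃ a l, a ∉ C ∧ (∀ q ∈ l, q ∈ C) ∧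
      List.Chain' (· ⋖ ·) (a :: (l ++ [p])) ∧ covV C x p = x a + (l.map x).sum := by
  intro p
  induction p using WellFoundedLT.induction with
  | _ p IH =>
  intro hp
  obtain ⟨q, hqp, hval⟩ := covV_exists C x hp
  by_cases hqC : q ∈ C
  · obtain ⟨a, l, haC, hlC, hchain, hV⟩ := IH q hqp.lt (hCne q hqC)
    refine ⟨a, l ++ [q], haC, ?_, ?_, ?_⟩
    · intro r hr
      rcases List.mem_append.mp hr with h | h
      · exact hlC r h
      · simp at h; subst h; exact hqC
    · unfold List.Chain'
      rw [show a :: (l ++ [q] ++ [p]) = (a :: (l ++ [q])) ++ [p] by simp,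
        List.isChain_append (l₁ := a :: (l ++ [q])) (l₂ := [p])]
      refine ⟨hchain, List.isChain_singleton p, ?_⟩
      intro r hr s hs
      simp only [List.head?_cons, Option.mem_def, Option.some_inj] at hs
      subst hs
      rw [List.getLast?_eq_getLast (by simp)] at hr
      simp only [Option.mem_def, Option.some_inj] at hr
      subst hr
      rwa [List.getLast_cons (by simp), List.getLast_concat]
    · rw [hval, if_pos hqC, hV, List.map_append, List.sum_append]
      simp [add_assoc]
  · refine ⟨q, [], hqC, by simp, ?_, ?_⟩
    · simpa [List.Chain', List.isChain_pair] using hqp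
    · rw [hval, if_neg hqC]; simp

open Classical in
lemma covV_top {P : Type*} [PartialOrder P] [Fintype P] (Pstar C O : Set P) (x : P → ℝ)
    (hCne : ∀ p ∈ C, ∃ q, q ⋖ p)
    (hnotC : ∀ p, p ∉ C → p ∈ Pstar ∪ O)
    (hx : ∀ a b l, a ∈ Pstar ∪ O → b ∈ Pstar ∪ O → SatChain C a b l →
      (l.map x).sum ≤ x b - x a)
    {q b : P} (hq : q ∈ C) (hqb : q ⋖ b) (hbC : b ∉ C) :
    covV C x q + x q ≤ x b := by
  obtain ⟨a, l, haC, hlC, hchain, hV⟩ := covV_attained C x hCne q (hCne q hq)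
  have hsat : SatChain C a b (l ++ [q]) := by
    constructor
    · intro r hr
      rcases List.mem_append.mp hr with h | h
      · exact hlC r h
      · simp at h; subst h; exact hq
    · unfold List.Chain'
      rw [show a :: ((l ++ [q]) ++ [b]) = (a :: (l ++ [q])) ++ [b] by simp,
        List.isChain_append]
      refine ⟨hchain, List.isChain_singleton b, ?_⟩
      intro r hr s hs
      simp only [List.head?_cons, Option.mem_def, Option.some_inj] at hs
      subst hs
      rw [List.getLast?_eq_getLast (by simp)] at hr
      simp only [Option.mem_def, Option.some_inj] at hr
      subst hr
      rwa [List.getLast_cons (by simp), List.getLast_concat]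
  have := hx a b (l ++ [q]) (hnotC a haC) (hnotC b hbC) hsat
  rw [List.map_append, List.sum_append] at this
  simp only [List.map_cons, List.map_nil, List.sum_cons, List.sum_nil, add_zero] at this
  rw [hV]
  linarith

open Classical in
lemma chain_sum_le {P : Type*} [PartialOrder P] [Fintype P] (C : Set P) (x : P → ℝ)
    (G : ℝ → ℝ) (hG : Monotone G) :
    ∀ (l : List P) (p : P), p ∈ C → (∀ q ∈ l, q ∈ C) → List.Chain' (· ⋖ ·) (p :: l) →
    ((p :: l).map fun q => G (covV C x q + x q) - G (covV C x q)).sum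
      ≤ G (covV C x ((p :: l).getLast (by simp)) + x ((p :: l).getLast (by simp)))
        - G (covV C x p) := by
  intro l
  induction l with
  | nil =>
    intro p _ _ _
    simp
  | cons q l' IH =>
    intro p hp hl hchain
    unfold List.Chain' at hchain
    rw [List.isChain_cons_cons] at hchain
    have hq : q ∈ C := hl q List.mem_cons_self
    have hIH := IH q hq (fun r hr => hl r (List.mem_cons_of_mem q hr)) hchain.2
    have hstep : covV C x p + x p ≤ covV C x q := by
      have := covV_le C x (q := p) (p := q) hchain.1
      rwa [if_pos hp] at this
    have hlast : (p :: q :: l').getLast (by simp) = (q :: l').getLast (by simp) :=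
      List.getLast_cons (by simp)
    rw [List.map_cons, List.sum_cons, hlast]
    have h1 : G (covV C x p + x p) ≤ G (covV C x q) := hG hstep
    linarith

lemma intSum {P : Type*} (x : P → ℝ) (hx : ∀ p, ∃ n : ℤ, x p = n) (l : List P) :
    ∃ n : ℤ, (l.map x).sum = n := by
  induction l with
  | nil => exact ⟨0, by simp⟩
  | cons p l IH =>
    obtain ⟨n, hn⟩ := IH
    obtain ⟨m, hm⟩ := hx p
    exact ⟨m + n, by simp [hn, hm]⟩

open Classical in
lemma decompose {P : Type*} [PartialOrder P] [Fintype P]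
    (Pstar C O : Set P)
    (hmin : ∀ p : P, IsMin p → p ∈ Pstar)
    (hcover : C ∪ O = Pstarᶜ) (hdisj : Disjoint C O)
    (k : ℕ) (I : ℕ → Set P)
    (hI0 : I 0 = ∅) (hIk : I (k + 1) = Pstar)
    (hsub : ∀ j, I j ⊆ Pstar)
    (hchain : ∀ j ≤ k, I j ⊂ I (j + 1))
    (lam mu : P → ℝ)
    (hlam : InConeChain Pstar I k lam) (hmu : InConeChain Pstar I k mu)
    (x : P → ℝ) (hx : x ∈ MCO Pstar C O (lam + mu)) :
    ∃ y z : P → ℝ, y ∈ MCO Pstar C O lam ∧ z ∈ MCO Pstar C O mu ∧ y + z = x ∧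
      ((∀ p, ∃ n : ℤ, x p = n) → (∀ a ∈ Pstar, ∃ n : ℤ, lam a = n) →
        (∀ a ∈ Pstar, ∃ n : ℤ, mu a = n) →
        (∀ p, ∃ n : ℤ, y p = n) ∧ (∀ p, ∃ n : ℤ, z p = n)) := by
  classical
  -- basic set facts
  have hCsub : C ⊆ Pstarᶜ := hcover ▸ Set.subset_union_left
  have hnotC : ∀ p, p ∉ C → p ∈ Pstar ∪ O := by
    intro p hp
    by_cases h : p ∈ Pstar
    · exact Or.inl h
    · have h2 : p ∈ C ∪ O := hcover ▸ (h : p ∈ Pstarᶜ)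
      rcases h2 with h' | h'
      · exact absurd h' hp
      · exact Or.inr h'
  have hCnotin : ∀ p ∈ Pstar ∪ O, p ∉ C := by
    intro p hp hpC
    rcases hp with h | h
    · exact hCsub hpC h
    · exact Set.disjoint_left.mp hdisj hpC h
  have hCne : ∀ p ∈ C, ∃ q, q ⋖ p := fun p hp =>
    exists_covBy_of_not_isMin (fun h => hCsub hp (hmin p h))
  -- choose representatives of the levels
  have hPne : Nonempty P := by
    obtain ⟨p, -⟩ := Set.exists_of_ssubset (hchain 0 (Nat.zero_le k))
    exact ⟨p⟩
  have hcex : ∀ j, ∃ p : P, j ≤ k → p ∈ I (j + 1) \ I j := by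
    intro j
    by_cases hj : j ≤ k
    · obtain ⟨p, hp1, hp2⟩ := Set.exists_of_ssubset (hchain j hj)
      exact ⟨p, fun _ => ⟨hp1, hp2⟩⟩
    · exact ⟨Classical.arbitrary P, fun h => absurd h hj⟩
  choose c hc using hcex
  -- every marked element has a level
  have hlev : ∀ a ∈ Pstar, ∃ j, j ≤ k ∧ a ∈ I (j + 1) \ I j := by
    intro a ha
    have hex : ∃ j, a ∈ I (j + 1) := ⟨k, hIk ▸ ha⟩
    refine ⟨Nat.find hex, Nat.find_le (hIk ▸ ha), Nat.find_spec hex, ?_⟩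
    rcases Nat.eq_zero_or_pos (Nat.find hex) with h | h
    · rw [h, hI0]; exact Set.notMem_empty a
    · obtain ⟨m, hm⟩ := Nat.exists_eq_succ_of_ne_zero h.ne'
      rw [hm]
      intro hmem
      exact Nat.find_min hex (hm ▸ Nat.lt_succ_self m) hmem
  -- constancy and monotonicity on levels
  have hconst : ∀ f : P → ℝ, InConeChain Pstar I k f →
      ∀ a ∈ Pstar, ∀ j ≤ k, a ∈ I (j + 1) \ I j → f a = f (c j) :=
    fun f hf a _ j hj hmem => hf.2.1 j hj a hmem (c j) (hc j hj)
  have hmono : ∀ f : P → ℝ, InConeChain Pstar I k f →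
      ∀ j j', j ≤ j' → j' ≤ k → f (c j) ≤ f (c j') :=
    fun f hf j j' h h' => hf.2.2 j j' h h' (c j) (hc j (h.trans h')) (c j') (hc j' h')
  -- the transfer function g
  set g : ℝ → ℝ := fun t => (Finset.range (k + 1)).sup'
    ⟨0, Finset.mem_range.mpr (Nat.succ_pos k)⟩
    (fun i => min (lam (c i)) (t - mu (c i))) with hg_def
  have hgmono : Monotone g := by
    intro t s hts
    apply Finset.sup'_le
    intro i hi
    refine le_trans (min_le_min le_rfl (sub_le_sub_right hts _)) ?_
    simp only [hg_def]
    exact Finset.le_sup' (fun i => min (lam (c i)) (s - mu (c i))) hi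
  have hglip : ∀ t s, t ≤ s → g s ≤ g t + (s - t) := by
    intro t s hts
    apply Finset.sup'_le
    intro i hi
    have h1 : min (lam (c i)) (s - mu (c i)) ≤ min (lam (c i)) (t - mu (c i)) + (s - t) := by
      rcases le_total (lam (c i)) (t - mu (c i)) with h | h
      · rw [min_eq_left h]; exact (min_le_left _ _).trans (by linarith)
      · rw [min_eq_right h]; exact (min_le_right _ _).trans (by linarith)
    have h2 := Finset.le_sup' (fun i => min (lam (c i)) (t - mu (c i))) hi
    simp only [hg_def]
    linarith
  have hgval : ∀ j ≤ k, g (lam (c j) + mu (c j)) = lam (c j) := by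
    intro j hj
    apply le_antisymm
    · apply Finset.sup'_le
      intro i hi
      have hik : i ≤ k := Nat.lt_succ_iff.mp (Finset.mem_range.mp hi)
      rcases le_total i j with h | h
      · exact (min_le_left _ _).trans (hmono lam hlam i j h hj)
      · have := hmono mu hmu j i h hik
        exact (min_le_right _ _).trans (by linarith)
    · have h2 := Finset.le_sup' (fun i => min (lam (c i)) (lam (c j) + mu (c j) - mu (c i)))
        (Finset.mem_range.mpr (Nat.lt_succ_of_le hj))
      have h3 : min (lam (c j)) (lam (c j) + mu (c j) - mu (c j)) = lam (c j) := by
        rw [show lam (c j) + mu (c j) - mu (c j) = lam (c j) by ring, min_self]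
      rw [h3] at h2
      exact h2
  -- values at marked points
  have hxmark : ∀ a ∈ Pstar, x a = lam a + mu a := fun a ha => hx.1 a ha
  have hgx : ∀ a ∈ Pstar, g (x a) = lam a := by
    intro a ha
    obtain ⟨j, hj, hmem⟩ := hlev a ha
    rw [hxmark a ha, hconst lam hlam a ha j hj hmem, hconst mu hmu a ha j hj hmem,
      hgval j hj, ← hconst lam hlam a ha j hj hmem]
  have hhx : ∀ a ∈ Pstar, x a - g (x a) = mu a := by
    intro a ha
    rw [hgx a ha, hxmark a ha]
    ring
  -- the generic membership lemma
  have hmemY : ∀ G : ℝ → ℝ, Monotone G → ∀ L : P → ℝ, (∀ a ∈ Pstar, G (x a) = L a) →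
      (fun p => if p ∈ C then G (covV C x p + x p) - G (covV C x p) else G (x p))
        ∈ MCO Pstar C O L := by
    intro G hG L hGL
    refine ⟨?_, ?_, ?_⟩
    · intro a ha
      simp only
      rw [if_neg (hCnotin a (Or.inl ha))]
      exact hGL a ha
    · intro p hp
      simp only
      rw [if_pos hp]
      have h0 := hx.2.1 p hp
      have : covV C x p ≤ covV C x p + x p := by linarith
      linarith [hG this]
    · rintro a b l ha hb ⟨hlC, hch⟩
      have haC := hCnotin a ha
      have hbC := hCnotin b hb
      have hmapl : l.map (fun p => if p ∈ C then G (covV C x p + x p) - G (covV C x p)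
          else G (x p)) = l.map (fun q => G (covV C x q + x q) - G (covV C x q)) := by
        apply List.map_congr_left
        intro q hq
        rw [if_pos (hlC q hq)]
      rw [hmapl]
      simp only [if_neg haC, if_neg hbC]
      cases l with
      | nil =>
        have h0 := hx.2.2 a b [] ha hb ⟨hlC, hch⟩
        simp only [List.map_nil, List.sum_nil] at h0 ⊢
        have : x a ≤ x b := by linarith
        linarith [hG this]
      | cons p l' =>
        have hpC : p ∈ C := hlC p List.mem_cons_self
        unfold List.Chain' at hch
        rw [show a :: ((p :: l') ++ [b]) = (a :: p :: l') ++ [b] by simp,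
          List.isChain_append] at hch
        obtain ⟨h1, -, h3⟩ := hch
        rw [List.isChain_cons_cons] at h1
        have hap : a ⋖ p := h1.1
        have hchain2 : List.Chain' (· ⋖ ·) (p :: l') := h1.2
        have hlastb : (p :: l').getLast (by simp) ⋖ b := by
          have := h3 ((a :: p :: l').getLast (by simp))
            (by rw [List.getLast?_eq_getLast (l := a :: p :: l') (by simp)]
                exact Option.mem_some_self _) b (by simp)
          rwa [List.getLast_cons (by simp)] at this
        have hlastC : (p :: l').getLast (by simp) ∈ C :=
          hlC _ (List.getLast_mem _)
        have hsum := chain_sum_le C x G hG l' p hpC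
          (fun r hr => hlC r (List.mem_cons_of_mem p hr)) hchain2
        have htop : covV C x ((p :: l').getLast (by simp))
            + x ((p :: l').getLast (by simp)) ≤ x b :=
          covV_top Pstar C O x hCne hnotC hx.2.2 hlastC hlastb hbC
        have hbot : x a ≤ covV C x p := by
          have := covV_le C x (q := a) (p := p) hap
          rwa [if_neg haC, zero_add] at this
        have h4 := hG htop
        have h5 := hG hbot
        linarith
  -- define y and z
  set y : P → ℝ := fun p => if p ∈ C then g (covV C x p + x p) - g (covV C x p)
    else g (x p) with hy_def
  set hfun : ℝ → ℝ := fun t => t - g t with hh_def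
  have hhmono : Monotone hfun := by
    intro t s hts
    have := hglip t s hts
    simp only [hh_def]
    linarith
  set z : P → ℝ := fun p => if p ∈ C then hfun (covV C x p + x p) - hfun (covV C x p)
    else hfun (x p) with hz_def
  have hymem : y ∈ MCO Pstar C O lam := hmemY g hgmono lam hgx
  have hzmem : z ∈ MCO Pstar C O mu := hmemY hfun hhmono mu hhx
  have hyz : y + z = x := by
    funext p
    simp only [Pi.add_apply, hy_def, hz_def, hh_def]
    by_cases hp : p ∈ C
    · rw [if_pos hp, if_pos hp]; ring
    · rw [if_neg hp, if_neg hp]; ring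
  refine ⟨y, z, hymem, hzmem, hyz, ?_⟩
  intro hxint hlamint hmuint
  have hcPstar : ∀ i ≤ k, c i ∈ Pstar := fun i hi => hsub (i + 1) (hc i hi).1
  have hgint : ∀ t : ℝ, (∃ n : ℤ, t = n) → ∃ n : ℤ, g t = n := by
    intro t ht
    obtain ⟨i, hi, hival⟩ := Finset.exists_mem_eq_sup'
      (⟨0, Finset.mem_range.mpr (Nat.succ_pos k)⟩ :
        (Finset.range (k + 1)).Nonempty)
      (fun i => min (lam (c i)) (t - mu (c i)))
    have hik : i ≤ k := Nat.lt_succ_iff.mp (Finset.mem_range.mp hi)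
    obtain ⟨n1, hn1⟩ := hlamint (c i) (hcPstar i hik)
    obtain ⟨n2, hn2⟩ := hmuint (c i) (hcPstar i hik)
    obtain ⟨n3, hn3⟩ := ht
    rw [hg_def]
    simp only
    rw [hival, hn1, hn2, hn3]
    rcases le_total (n1 : ℝ) ((n3 : ℝ) - n2) with h | h
    · exact ⟨n1, min_eq_left h⟩
    · exact ⟨n3 - n2, by rw [min_eq_right h]; push_cast; ring⟩
  have hVint : ∀ p ∈ C, ∃ n : ℤ, covV C x p = n := by
    intro p hp
    obtain ⟨a, l, -, -, -, hV⟩ := covV_attained C x hCne p (hCne p hp)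
    obtain ⟨n, hn⟩ := intSum x hxint l
    obtain ⟨m, hm⟩ := hxint a
    exact ⟨m + n, by rw [hV, hn, hm]; push_cast; ring⟩
  have hyint : ∀ p, ∃ n : ℤ, y p = n := by
    intro p
    simp only [hy_def]
    by_cases hp : p ∈ C
    · rw [if_pos hp]
      obtain ⟨m, hm⟩ := hVint p hp
      obtain ⟨m', hm'⟩ := hxint p
      obtain ⟨n1, hn1⟩ := hgint (covV C x p + x p) ⟨m + m', by rw [hm, hm']; push_cast; ring⟩
      obtain ⟨n2, hn2⟩ := hgint (covV C x p) ⟨m, hm⟩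
      exact ⟨n1 - n2, by rw [hn1, hn2]; push_cast; ring⟩
    · rw [if_neg hp]
      exact hgint (x p) (hxint p)
  refine ⟨hyint, ?_⟩
  intro p
  obtain ⟨n, hn⟩ := hyint p
  obtain ⟨m, hm⟩ := hxint p
  have : z p = x p - y p := by
    have := congrFun hyz p
    simp only [Pi.add_apply] at this
    linarith
  exact ⟨m - n, by rw [this, hn, hm]; push_cast; ring⟩

/-- if two markings `λ, μ` lie in a common cone `L(P*, I)` for a chain of
order ideals `I` in `P*`, then `O_{C,O}(P,λ+μ) = O_{C,O}(P,λ) + O_{C,O}(P,μ)`, and the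
same holds for lattice points when `λ` and `μ` are integral. -/
theorem mco_cone_minkowski {P : Type*} [PartialOrder P] [Fintype P]
    (Pstar C O : Set P)
    (hmin : ∀ p : P, IsMin p → p ∈ Pstar)
    (hcover : C ∪ O = Pstarᶜ) (hdisj : Disjoint C O)
    (k : ℕ) (I : ℕ → Set P)
    (hI0 : I 0 = ∅) (hIk : I (k + 1) = Pstar)
    (hsub : ∀ j, I j ⊆ Pstar)
    (hchain : ∀ j ≤ k, I j ⊂ I (j + 1))
    (hideal : ∀ j, ∀ a ∈ Pstar, ∀ b ∈ I j, a ≤ b → a ∈ I j)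
    (lam mu : P → ℝ)
    (hlam : InConeChain Pstar I k lam) (hmu : InConeChain Pstar I k mu) :
    MCO Pstar C O (lam + mu) = MCO Pstar C O lam + MCO Pstar C O mu ∧
    ((∀ a ∈ Pstar, ∃ n : ℤ, lam a = n) → (∀ a ∈ Pstar, ∃ n : ℤ, mu a = n) →
      {x ∈ MCO Pstar C O (lam + mu) | ∀ p, ∃ n : ℤ, x p = n} =
        {x ∈ MCO Pstar C O lam | ∀ p, ∃ n : ℤ, x p = n} +
          {x ∈ MCO Pstar C O mu | ∀ p, ∃ n : ℤ, x p = n}) := by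
  classical
  have hadd : ∀ y ∈ MCO Pstar C O lam, ∀ z ∈ MCO Pstar C O mu,
      y + z ∈ MCO Pstar C O (lam + mu) := by
    rintro y ⟨hy1, hy2, hy3⟩ z ⟨hz1, hz2, hz3⟩
    have hmap : ∀ l : List P, (l.map (y + z)).sum = (l.map y).sum + (l.map z).sum := by
      intro l
      induction l with
      | nil => simp
      | cons p l IH =>
        simp only [List.map_cons, List.sum_cons, Pi.add_apply]
        rw [IH]
        ring
    refine ⟨?_, ?_, ?_⟩
    · intro a ha
      simp only [Pi.add_apply, hy1 a ha, hz1 a ha]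
    · intro p hp
      simp only [Pi.add_apply]
      exact add_nonneg (hy2 p hp) (hz2 p hp)
    · intro a b l ha hb hs
      have h1 := hy3 a b l ha hb hs
      have h2 := hz3 a b l ha hb hs
      rw [hmap l]
      simp only [Pi.add_apply]
      linarith
  constructor
  · apply Set.Subset.antisymm
    · intro x hx
      obtain ⟨y, z, hy, hz, hyz, -⟩ := decompose Pstar C O hmin hcover hdisj k I hI0 hIk
        hsub hchain lam mu hlam hmu x hx
      exact Set.mem_add.mpr ⟨y, hy, z, hz, hyz⟩
    · intro x hx
      obtain ⟨y, hy, z, hz, hyz⟩ := Set.mem_add.mp hx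
      rw [← hyz]
      exact hadd y hy z hz
  · intro hlamint hmuint
    apply Set.Subset.antisymm
    · rintro x ⟨hx, hxint⟩
      obtain ⟨y, z, hy, hz, hyz, hint⟩ := decompose Pstar C O hmin hcover hdisj k I hI0 hIk
        hsub hchain lam mu hlam hmu x hx
      obtain ⟨hyint, hzint⟩ := hint hxint hlamint hmuint
      exact Set.mem_add.mpr ⟨y, ⟨hy, hyint⟩, z, ⟨hz, hzint⟩, hyz⟩
    · intro x hx
      obtain ⟨y, ⟨hy, hyint⟩, z, ⟨hz, hzint⟩, hyz⟩ := Set.mem_add.mp hx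
      rw [← hyz]
      refine ⟨hadd y hy z hz, ?_⟩
      intro p
      obtain ⟨m, hm⟩ := hyint p
      obtain ⟨n, hn⟩ := hzint p
      exact ⟨m + n, by simp [Pi.add_apply, hm, hn]⟩
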